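/- If A ∈ C^{[m,n]} is an S-QDSDD tensor for some nonempty proper subset S of N, then either |a_{i…i}| > r_i(A) for all i ∈ S, or |a_{j…j}| > r_j(A) for all j ∈ S̄. -/

import Mathlib

open Finset

/-- off-diagonal row sum r_i(A) for a complex tensor of order k+1, dimension n -/
noncomputable def rT {n k : ℕ} (A : (Fin (k+1) → Fin n) → ℂ) (i : Fin n) : ℝ :=
  ∑ α ∈ Finset.univ.filter (fun α : Fin k → Fin n => α ≠ fun _ => i),
    ‖A (Fin.cons i α)‖

/-- r_i^j(A) = r_i(A) - |a_{ij...j}| -/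
noncomputable def rTj {n k : ℕ} (A : (Fin (k+1) → Fin n) → ℂ) (i j : Fin n) : ℝ :=
  rT A i - ‖A (Fin.cons i fun _ => j)‖

/-- r_j^{Δ^S}(A): sum over index tuples all lying in S, excluding the diagonal tuple -/
noncomputable def rDelta {n k : ℕ} (A : (Fin (k+1) → Fin n) → ℂ) (S : Finset (Fin n))
    (j : Fin n) : ℝ :=
  ∑ α ∈ Finset.univ.filter (fun α : Fin k → Fin n => (∀ l, α l ∈ S) ∧ α ≠ fun _ => j),
    ‖A (Fin.cons j α)‖

/-- r_j^{Δ^S-complement}(A): sum over index tuples not all lying in S -/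
noncomputable def rDeltaC {n k : ℕ} (A : (Fin (k+1) → Fin n) → ℂ) (S : Finset (Fin n))
    (j : Fin n) : ℝ :=
  ∑ α ∈ Finset.univ.filter (fun α : Fin k → Fin n => ¬ (∀ l, α l ∈ S)),
    ‖A (Fin.cons j α)‖

/-- λ is an eigenvalue of the tensor A: A x^{m-1} = λ x^{[m-1]} for some nonzero x -/
def IsEig {n k : ℕ} (A : (Fin (k+1) → Fin n) → ℂ) (lam : ℂ) : Prop :=
  ∃ x : Fin n → ℂ, x ≠ 0 ∧ ∀ i,
    (∑ α : Fin k → Fin n, A (Fin.cons i α) * ∏ l, x (α l)) = lam * (x i) ^ k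

theorem stmt18 {n k : ℕ} (hn : 2 ≤ n) (A : (Fin (k+1) → Fin n) → ℂ)
    (S : Finset (Fin n)) (hS : S.Nonempty) (hS' : S ≠ Finset.univ)
    (h : ∀ i ∈ S, ∀ j ∈ Sᶜ,
      rT A j * ‖A (Fin.cons i fun _ => j)‖ <
        (‖A (fun _ => i)‖ - rTj A i j) * ‖A (fun _ => j)‖ ∧
      rT A i * ‖A (Fin.cons j fun _ => i)‖ <
        (‖A (fun _ => j)‖ - rTj A j i) * ‖A (fun _ => i)‖) :
    (∀ i ∈ S, rT A i < ‖A (fun _ => i)‖) ∨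
    (∀ j ∈ Sᶜ, rT A j < ‖A (fun _ => j)‖) := by
  by_contra hc
  push_neg at hc
  obtain ⟨⟨i, hi, hri⟩, ⟨j, hj, hrj⟩⟩ := hc
  obtain ⟨h1, _⟩ := h i hi j hj
  unfold rTj at h1
  have hc0 : (0:ℝ) ≤ ‖A (Fin.cons i fun _ => j)‖ := norm_nonneg _
  have ha0 : (0:ℝ) ≤ ‖A (fun _ => j)‖ := norm_nonneg _
  nlinarith [mul_nonneg (sub_nonneg.mpr hri) ha0,
    mul_nonneg hc0 (sub_nonneg.mpr hrj)]
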